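/- Suppose x is a vector in an ℋ-module M on which C_I acts as 0 and C_{LI} as c, satisfying L(k)x = I(k)x = 0 for all k > 0, and suppose the operators W(n) are defined on M by W(n) = 2c(−n−1)I(n) + ∑_{i∈ℤ} :I(−i)I(n+i): (a locally finite sum on M). Then W(n)x = 0 for all n > 0. That is, every ℋ-singular vector is W(2,2)-singular under the free field realization. -/

import Mathlib

/-- Free field realization: let M be a restricted module over the twisted
Heisenberg–Virasoro algebra at level zero (C_I = 0, C_{LI} = c), and suppose the
operators W(n) are given on M by W(n) = 2c(−n−1)I(n) + ∑_{i∈ℤ} I(−i)I(n+i), the sum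
being locally finite (for each vector m, all but finitely many terms vanish, and W(n)m
equals 2c(−n−1)·I(n)m plus the sum of the nonvanishing terms). If x satisfies
L(k)x = I(k)x = 0 for all k > 0, then W(n)x = 0 for all n > 0: every ℋ-singular vector
is W(2,2)-singular. -/
theorem H_singular_is_W_singular
    {M : Type*} [AddCommGroup M] [Module ℂ M]
    (L I W : ℤ → Module.End ℂ M) (CL : Module.End ℂ M) (c : ℂ)
    (hLL : ∀ n m : ℤ, ⁅L n, L m⁆ =
      ((n - m : ℤ) : ℂ) • L (n + m) +
        (if n = -m then (((n : ℂ) ^ 3 - (n : ℂ)) / 12) • CL else 0))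
    (hLI : ∀ n m : ℤ, ⁅L n, I m⁆ =
      (-(m : ℂ)) • I (n + m) +
        (if n = -m then (-(((n : ℂ) ^ 2 + (n : ℂ)) * c)) • (1 : Module.End ℂ M) else 0))
    (hII : ∀ n m : ℤ, ⁅I n, I m⁆ = 0)
    (hres : ∀ m : M, ∃ N : ℤ, ∀ k : ℤ, N ≤ k → I k m = 0 ∧ L k m = 0)
    (hW : ∀ n : ℤ, ∀ m : M, ∀ S : Finset ℤ,
      (∀ i : ℤ, i ∉ S → I (-i) (I (n + i) m) = 0) →
      W n m = (2 * c * (-(n : ℂ) - 1)) • I n m + ∑ i ∈ S, I (-i) (I (n + i) m))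
    (x : M)
    (hx : ∀ k : ℤ, 0 < k → L k x = 0 ∧ I k x = 0) :
    ∀ n : ℤ, 0 < n → W n x = 0 := by
  intro n hn
  have hzero : ∀ i : ℤ, i ∉ (∅ : Finset ℤ) → I (-i) (I (n + i) x) = 0 := by
    intro i _
    rcases le_or_gt 0 i with hi | hi
    · have : I (n + i) x = 0 := (hx (n + i) (by omega)).2
      rw [this, map_zero]
    · have hcomm := hII (-i) (n + i)
      rw [Ring.lie_def, sub_eq_zero] at hcomm
      have := congrArg (fun f : Module.End ℂ M => f x) hcomm
      simp only [Module.End.mul_apply] at this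
      rw [this, (hx (-i) (by omega)).2, map_zero]
  rw [hW n x ∅ hzero, Finset.sum_empty, (hx n hn).2, smul_zero, add_zero]
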